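/- Let ε ∈ (ℂ∖iℝ)ⁿ and α ∈ ℂⁿ with ε − α ∈ (ℂ∖iℝ)ⁿ, let τ be in the upper half-plane, u ∈ ℂⁿ, and set u' := u − iA⁻¹ατ. Then h_{ε−α}(u', τ) = e^{(πi/τ)(u,Au)} (2i)^{−n} √((−iτ)ⁿ/det A) · ∫_{ℝⁿ+iα} q^{(w,A⁻¹w)/2} e^{−2πi(u,w)} / ∏ⱼ₌₁ⁿ sin(π(wⱼ − iεⱼ)) dⁿw, where ∫_{ℝⁿ+iα} f dⁿw denotes ∫_{ℝⁿ} f(w + iα) dⁿw. -/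

import Mathlib

open Complex MeasureTheory

noncomputable section

/-- Standard ℂ-bilinear form on ℂⁿ. -/
def bil {n : ℕ} (x y : Fin n → ℂ) : ℂ := ∑ i, x i * y i

/-- The function h_ε(u,τ). -/
def hfun {n : ℕ} (A : Matrix (Fin n) (Fin n) ℝ) (ε u : Fin n → ℂ) (τ : ℂ) : ℂ :=
  Complex.exp ((Real.pi : ℂ) * Complex.I / τ * bil u ((A.map Complex.ofReal).mulVec u)) *
  ((2 * Complex.I) ^ n)⁻¹ *
  (((-Complex.I * τ) ^ n / (A.det : ℂ)) ^ ((1 : ℂ) / 2)) *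
  ∫ w : Fin n → ℝ,
    Complex.exp (2 * (Real.pi : ℂ) * Complex.I * τ *
        (bil (fun i => (w i : ℂ)) ((A⁻¹.map Complex.ofReal).mulVec (fun i => (w i : ℂ))) / 2)) *
    Complex.exp (-2 * (Real.pi : ℂ) * Complex.I * bil u (fun i => (w i : ℂ))) /
    ∏ j, Complex.sin ((Real.pi : ℂ) * ((w j : ℂ) - Complex.I * ε j))

/-- The double-sum form of the bilinear form with a matrix inserted. -/
def b2 {n : ℕ} (M : Matrix (Fin n) (Fin n) ℂ) (x y : Fin n → ℂ) : ℂ :=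
  ∑ i, ∑ j, x i * M i j * y j

lemma bil_comm {n : ℕ} (x y : Fin n → ℂ) : bil x y = bil y x := by
  unfold bil
  exact Finset.sum_congr rfl fun i _ => mul_comm _ _

lemma bil_mulVec {n : ℕ} (M : Matrix (Fin n) (Fin n) ℂ) (x y : Fin n → ℂ) :
    bil x (M.mulVec y) = b2 M x y := by
  unfold bil b2 Matrix.mulVec dotProduct
  refine Finset.sum_congr rfl fun i _ => ?_
  rw [Finset.mul_sum]
  exact Finset.sum_congr rfl fun j _ => by ring

lemma b2_symm {n : ℕ} (M : Matrix (Fin n) (Fin n) ℂ) (hM : M.IsSymm) (x y : Fin n → ℂ) :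
    b2 M x y = b2 M y x := by
  unfold b2
  rw [Finset.sum_comm]
  refine Finset.sum_congr rfl fun i _ => Finset.sum_congr rfl fun j _ => ?_
  rw [← hM.apply i j]
  ring

lemma b2_expand {n : ℕ} (M : Matrix (Fin n) (Fin n) ℂ) (x y z v : Fin n → ℂ) (c d : ℂ) :
    b2 M (fun i => x i + c * y i) (fun i => z i + d * v i)
      = b2 M x z + d * b2 M x v + c * b2 M y z + c * d * b2 M y v := by
  unfold b2
  rw [Finset.mul_sum, Finset.mul_sum, Finset.mul_sum, ← Finset.sum_add_distrib,
    ← Finset.sum_add_distrib, ← Finset.sum_add_distrib]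
  refine Finset.sum_congr rfl fun i _ => ?_
  rw [Finset.mul_sum, Finset.mul_sum, Finset.mul_sum, ← Finset.sum_add_distrib,
    ← Finset.sum_add_distrib, ← Finset.sum_add_distrib]
  exact Finset.sum_congr rfl fun j _ => by ring

lemma bilexp {n : ℕ} (M : Matrix (Fin n) (Fin n) ℂ) (x y : Fin n → ℂ) (c : ℂ) :
    b2 M (fun i => x i + c * y i) (fun i => x i + c * y i)
      = b2 M x x + c * b2 M x y + c * b2 M y x + c * c * b2 M y y :=
  b2_expand M x y x y c c

lemma bilexp' {n : ℕ} (M : Matrix (Fin n) (Fin n) ℂ) (x y : Fin n → ℂ) (c : ℂ) :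
    b2 M (fun i => x i + c * y i) (fun i => x i + c * y i)
      = b2 M x x + c * b2 M x y + c * b2 M y x + c * c * b2 M y y :=
  b2_expand M x y x y c c

lemma bil_expand_right {n : ℕ} (x z v : Fin n → ℂ) (d : ℂ) :
    bil x (fun i => z i + d * v i) = bil x z + d * bil x v := by
  unfold bil
  rw [Finset.mul_sum, ← Finset.sum_add_distrib]
  exact Finset.sum_congr rfl fun i _ => by ring

lemma bil_expand_left {n : ℕ} (x y z : Fin n → ℂ) (c : ℂ) :
    bil (fun i => x i + c * y i) z = bil x z + c * bil y z := by
  unfold bil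
  rw [Finset.mul_sum, ← Finset.sum_add_distrib]
  exact Finset.sum_congr rfl fun i _ => by ring

theorem stmt3 {n : ℕ} (hn : 1 ≤ n) (A : Matrix (Fin n) (Fin n) ℝ)
    (hAsymm : A.IsSymm) (hApd : A.PosDef)
    (hAint : ∀ i j, ∃ m : ℤ, A i j = (m : ℝ))
    (ε α u : Fin n → ℂ)
    (hε : ∀ j, (ε j).re ≠ 0) (hεα : ∀ j, (ε j - α j).re ≠ 0)
    (τ : ℂ) (hτ : 0 < τ.im) :
    hfun A (ε - α) (fun i => u i - Complex.I * τ * (A⁻¹.map Complex.ofReal).mulVec α i) τ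
      = Complex.exp ((Real.pi : ℂ) * Complex.I / τ * bil u ((A.map Complex.ofReal).mulVec u)) *
        ((2 * Complex.I) ^ n)⁻¹ *
        (((-Complex.I * τ) ^ n / (A.det : ℂ)) ^ ((1 : ℂ) / 2)) *
        ∫ w : Fin n → ℝ,
          Complex.exp (2 * (Real.pi : ℂ) * Complex.I * τ *
              (bil (fun i => (w i : ℂ) + Complex.I * α i)
                ((A⁻¹.map Complex.ofReal).mulVec (fun i => (w i : ℂ) + Complex.I * α i)) / 2)) *
          Complex.exp (-2 * (Real.pi : ℂ) * Complex.I *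
              bil u (fun i => (w i : ℂ) + Complex.I * α i)) /
          ∏ j, Complex.sin ((Real.pi : ℂ) * (((w j : ℂ) + Complex.I * α j) - Complex.I * ε j)) := by
  classical
  set M := A.map Complex.ofReal with hMdef
  set B := A⁻¹.map Complex.ofReal with hBdef
  have hτ0 : τ ≠ 0 := by
    intro h; rw [h] at hτ; simp at hτ
  have hdet : IsUnit A.det := hApd.det_pos.ne'.isUnit
  have hMB : M * B = 1 := by
    have h1 : A * A⁻¹ = 1 := Matrix.mul_nonsing_inv A hdet
    have h2 : (A * A⁻¹).map (Complex.ofRealHom) = (1 : Matrix (Fin n) (Fin n) ℝ).map Complex.ofRealHom := by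
      rw [h1]
    rw [Matrix.map_mul, Matrix.map_one Complex.ofRealHom (map_zero _) (map_one _)] at h2
    have h3 : A.map (⇑Complex.ofRealHom) = M ∧ A⁻¹.map (⇑Complex.ofRealHom) = B := by
      constructor <;> rfl
    rw [h3.1, h3.2] at h2
    exact h2
  have hMs : M.IsSymm := by
    rw [hMdef, Matrix.IsSymm, ← Matrix.transpose_map, hAsymm]
  have hBs : B.IsSymm := by
    rw [hBdef, Matrix.IsSymm, ← Matrix.transpose_map, Matrix.transpose_nonsing_inv, hAsymm]
  -- abbreviations
  set u' : Fin n → ℂ := fun i => u i - Complex.I * τ * B.mulVec α i with hu'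
  simp only [hfun]
  rw [← hMdef, ← hBdef]
  -- pointwise equality of prefactor * integrand
  have key : ∀ w : Fin n → ℝ,
      Complex.exp ((Real.pi : ℂ) * Complex.I / τ * bil u' (M.mulVec u')) *
        (Complex.exp (2 * (Real.pi : ℂ) * Complex.I * τ *
            (bil (fun i => (w i : ℂ)) (B.mulVec (fun i => (w i : ℂ))) / 2)) *
          Complex.exp (-2 * (Real.pi : ℂ) * Complex.I * bil u' (fun i => (w i : ℂ))) /
          ∏ j, Complex.sin ((Real.pi : ℂ) * ((w j : ℂ) - Complex.I * (ε - α) j)))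
      = Complex.exp ((Real.pi : ℂ) * Complex.I / τ * bil u (M.mulVec u)) *
        (Complex.exp (2 * (Real.pi : ℂ) * Complex.I * τ *
            (bil (fun i => (w i : ℂ) + Complex.I * α i)
              (B.mulVec (fun i => (w i : ℂ) + Complex.I * α i)) / 2)) *
          Complex.exp (-2 * (Real.pi : ℂ) * Complex.I *
            bil u (fun i => (w i : ℂ) + Complex.I * α i)) /
          ∏ j, Complex.sin ((Real.pi : ℂ) * (((w j : ℂ) + Complex.I * α j) - Complex.I * ε j))) := by
    intro w
    set wc : Fin n → ℂ := fun i => (w i : ℂ) with hwc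
    -- the sine products agree
    have hsin : (∏ j, Complex.sin ((Real.pi : ℂ) * ((w j : ℂ) - Complex.I * (ε - α) j)))
        = ∏ j, Complex.sin ((Real.pi : ℂ) * (((w j : ℂ) + Complex.I * α j) - Complex.I * ε j)) := by
      refine Finset.prod_congr rfl fun j _ => ?_
      congr 1
      simp only [Pi.sub_apply]
      ring
    rw [hsin]
    simp only [mul_div_assoc']
    rw [← Complex.exp_add, ← Complex.exp_add, ← Complex.exp_add, ← Complex.exp_add]
    congr 2
    -- the exponent identity
    have hu'2 : u' = fun i => u i + (-(Complex.I * τ)) * B.mulVec α i := by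
      funext i; rw [hu']; ring
    have hwα : (fun i => (w i : ℂ) + Complex.I * α i)
        = fun i => wc i + Complex.I * α i := rfl
    rw [hu'2, hwα]
    rw [bil_mulVec, bil_mulVec, bil_mulVec, bil_mulVec,
      bilexp M u (B.mulVec α) (-(Complex.I * τ)),
      bilexp' B wc α Complex.I, bil_expand_right u wc α Complex.I,
      bil_expand_left u (B.mulVec α) wc (-(Complex.I * τ))]
    -- reduce the matrix quantities
    have h1 : b2 M u (B.mulVec α) = bil u α := by
      rw [← bil_mulVec, Matrix.mulVec_mulVec, hMB, Matrix.one_mulVec]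
    have h2 : b2 M (B.mulVec α) u = bil u α := by rw [b2_symm M hMs]; exact h1
    have h3 : b2 M (B.mulVec α) (B.mulVec α) = b2 B α α := by
      rw [← bil_mulVec, Matrix.mulVec_mulVec, hMB, Matrix.one_mulVec, bil_comm, bil_mulVec]
    have h4 : b2 B α wc = b2 B wc α := b2_symm B hBs α wc
    have h5 : bil (B.mulVec α) wc = b2 B wc α := by rw [bil_comm, bil_mulVec]
    rw [h1, h2, h3, h4, h5]
    field_simp
    linear_combination
  -- move the exponential prefactors into the integrals and conclude
  have hL : Complex.exp ((Real.pi : ℂ) * Complex.I / τ * bil u' (M.mulVec u')) *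
        ((2 * Complex.I) ^ n)⁻¹ *
        (((-Complex.I * τ) ^ n / (A.det : ℂ)) ^ ((1 : ℂ) / 2)) *
        ∫ w : Fin n → ℝ,
          Complex.exp (2 * (Real.pi : ℂ) * Complex.I * τ *
              (bil (fun i => (w i : ℂ)) (B.mulVec (fun i => (w i : ℂ))) / 2)) *
            Complex.exp (-2 * (Real.pi : ℂ) * Complex.I * bil u' (fun i => (w i : ℂ))) /
            ∏ j, Complex.sin ((Real.pi : ℂ) * ((w j : ℂ) - Complex.I * (ε - α) j))
      = ((2 * Complex.I) ^ n)⁻¹ *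
        (((-Complex.I * τ) ^ n / (A.det : ℂ)) ^ ((1 : ℂ) / 2)) *
        ∫ w : Fin n → ℝ,
          Complex.exp ((Real.pi : ℂ) * Complex.I / τ * bil u' (M.mulVec u')) *
            (Complex.exp (2 * (Real.pi : ℂ) * Complex.I * τ *
                (bil (fun i => (w i : ℂ)) (B.mulVec (fun i => (w i : ℂ))) / 2)) *
              Complex.exp (-2 * (Real.pi : ℂ) * Complex.I * bil u' (fun i => (w i : ℂ))) /
              ∏ j, Complex.sin ((Real.pi : ℂ) * ((w j : ℂ) - Complex.I * (ε - α) j))) := by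
    rw [MeasureTheory.integral_const_mul]; ring
  have hR : Complex.exp ((Real.pi : ℂ) * Complex.I / τ * bil u (M.mulVec u)) *
        ((2 * Complex.I) ^ n)⁻¹ *
        (((-Complex.I * τ) ^ n / (A.det : ℂ)) ^ ((1 : ℂ) / 2)) *
        ∫ w : Fin n → ℝ,
          Complex.exp (2 * (Real.pi : ℂ) * Complex.I * τ *
              (bil (fun i => (w i : ℂ) + Complex.I * α i)
                (B.mulVec (fun i => (w i : ℂ) + Complex.I * α i)) / 2)) *
            Complex.exp (-2 * (Real.pi : ℂ) * Complex.I *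
              bil u (fun i => (w i : ℂ) + Complex.I * α i)) /
            ∏ j, Complex.sin ((Real.pi : ℂ) * (((w j : ℂ) + Complex.I * α j) - Complex.I * ε j))
      = ((2 * Complex.I) ^ n)⁻¹ *
        (((-Complex.I * τ) ^ n / (A.det : ℂ)) ^ ((1 : ℂ) / 2)) *
        ∫ w : Fin n → ℝ,
          Complex.exp ((Real.pi : ℂ) * Complex.I / τ * bil u (M.mulVec u)) *
            (Complex.exp (2 * (Real.pi : ℂ) * Complex.I * τ *
                (bil (fun i => (w i : ℂ) + Complex.I * α i)
                  (B.mulVec (fun i => (w i : ℂ) + Complex.I * α i)) / 2)) *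
              Complex.exp (-2 * (Real.pi : ℂ) * Complex.I *
                bil u (fun i => (w i : ℂ) + Complex.I * α i)) /
              ∏ j, Complex.sin ((Real.pi : ℂ) * (((w j : ℂ) + Complex.I * α j) - Complex.I * ε j))) := by
    rw [MeasureTheory.integral_const_mul]; ring
  rw [hL, hR]
  congr 1
  exact integral_congr_ae (Filter.Eventually.of_forall key)
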